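/- (Extended descent lemma) Let f : ℝ^N → ℝ be convex and Fréchet differentiable with ∇f L-Lipschitz continuous, and let s ∈ (0, 1/L]. Then for all x, y ∈ ℝ^N: f(y − s∇f(y)) ≤ f(x) + ⟨∇f(y), y − x⟩ − (s/2)‖∇f(y)‖² − (s/2)‖∇f(x) − ∇f(y)‖². -/

import Mathlib

open scoped RealInnerProductSpace
open intervalIntegral

variable {E : Type*} [NormedAddCommGroup E] [InnerProductSpace ℝ E] [CompleteSpace E]

theorem line_deriv (f : E → ℝ) (f' : E → E) (hdiff : ∀ p, HasGradientAt f (f' p) p)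
    (a v : E) (t : ℝ) :
    HasDerivAt (fun t : ℝ => f (a + t • v)) ⟪f' (a + t • v), v⟫ t := by
  have h1 : HasDerivAt (fun t : ℝ => a + t • v) v t := by
    simpa using (hasDerivAt_id t).smul_const v |>.const_add a
  have h2 := (hdiff (a + t • v)).hasFDerivAt.comp_hasDerivAt t h1
  simpa [Function.comp_def] using h2

theorem descentA (f : E → ℝ) (f' : E → E) (L : ℝ)
    (hdiff : ∀ p, HasGradientAt f (f' p) p)
    (hLip : ∀ p q, ‖f' p - f' q‖ ≤ L * ‖p - q‖) (a b : E) :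
    f b ≤ f a + ⟪f' a, b - a⟫ + L / 2 * ‖b - a‖ ^ 2 := by
  have hcont : Continuous f' := by
    rcases le_or_gt L 0 with h | h
    · have : ∀ p q, f' p = f' q := by
        intro p q
        have := hLip p q
        have h2 : L * ‖p - q‖ ≤ 0 := mul_nonpos_of_nonpos_of_nonneg h (norm_nonneg _)
        have := le_trans this h2
        rwa [norm_le_zero_iff, sub_eq_zero] at this
      exact continuous_const.congr fun p => (this p (0:E)).symm
    · exact (LipschitzWith.of_dist_le_mul (K := ⟨L, h.le⟩) (fun p q => by
        rw [dist_eq_norm, dist_eq_norm]; exact hLip p q)).continuous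
  set v := b - a with hv
  have hline : Continuous fun t : ℝ => a + t • v := by continuity
  have hcg : Continuous fun t : ℝ => ⟪f' (a + t • v), v⟫ :=
    (hcont.comp hline).inner continuous_const
  have hFTC : ∫ t in (0:ℝ)..1, ⟪f' (a + t • v), v⟫ = f b - f a := by
    have := integral_eq_sub_of_hasDerivAt (f := fun t : ℝ => f (a + t • v))
      (f' := fun t : ℝ => ⟪f' (a + t • v), v⟫) (a := 0) (b := 1)
      (fun t _ => line_deriv f f' hdiff a v t)
      (hcg.intervalIntegrable 0 1)
    simpa [hv] using this
  have hbound : ∀ t ∈ Set.Icc (0:ℝ) 1,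
      ⟪f' (a + t • v), v⟫ ≤ ⟪f' a, v⟫ + L * t * ‖v‖ ^ 2 := by
    intro t ht
    have h1 : ⟪f' (a + t • v) - f' a, v⟫ ≤ ‖f' (a + t • v) - f' a‖ * ‖v‖ :=
      real_inner_le_norm _ _
    have h2 : ‖f' (a + t • v) - f' a‖ ≤ L * (t * ‖v‖) := by
      have := hLip (a + t • v) a
      simpa [norm_smul, abs_of_nonneg ht.1] using this
    have h3 : ‖f' (a + t • v) - f' a‖ * ‖v‖ ≤ L * (t * ‖v‖) * ‖v‖ :=
      mul_le_mul_of_nonneg_right h2 (norm_nonneg _)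
    have := h1.trans h3
    rw [inner_sub_left] at this
    nlinarith [this]
  have hint : ∫ t in (0:ℝ)..1, (⟪f' a, v⟫ + L * t * ‖v‖ ^ 2)
      = ⟪f' a, v⟫ + L / 2 * ‖v‖ ^ 2 := by
    have heq : (fun t : ℝ => ⟪f' a, v⟫ + L * t * ‖v‖ ^ 2)
        = fun t : ℝ => ⟪f' a, v⟫ + t * (L * ‖v‖ ^ 2) := by ext t; ring
    rw [heq, intervalIntegral.integral_add intervalIntegrable_const
      (intervalIntegrable_id.mul_const _),
      intervalIntegral.integral_const, intervalIntegral.integral_mul_const, integral_id]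
    norm_num; ring
  have hmono : ∫ t in (0:ℝ)..1, ⟪f' (a + t • v), v⟫
      ≤ ∫ t in (0:ℝ)..1, (⟪f' a, v⟫ + L * t * ‖v‖ ^ 2) := by
    apply intervalIntegral.integral_mono_on zero_le_one
      (hcg.intervalIntegrable 0 1)
      ((Continuous.intervalIntegrable (by continuity) 0 1))
      hbound
  rw [hFTC, hint] at hmono
  linarith

theorem grad_ineq (f : E → ℝ) (f' : E → E)
    (hconv : ConvexOn ℝ Set.univ f)
    (hdiff : ∀ p, HasGradientAt f (f' p) p) (y z : E) :
    f y + ⟪f' y, z - y⟫ ≤ f z := by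
  set g : ℝ → ℝ := fun t => f (y + t • (z - y)) with hgdef
  have hg : ConvexOn ℝ Set.univ g := by
    have h := hconv.comp_affineMap (AffineMap.lineMap y z : ℝ →ᵃ[ℝ] E)
    have : g = f ∘ (AffineMap.lineMap y z : ℝ →ᵃ[ℝ] E) := by
      ext t
      simp [g, AffineMap.lineMap_apply_module]
      congr 1
      module
    rw [this]
    simpa using h
  have hd : HasDerivAt g ⟪f' y, z - y⟫ 0 := by
    have := line_deriv f f' hdiff y (z - y) 0
    simpa [g] using this
  have hs := hg.le_slope_of_hasDerivAt (Set.mem_univ 0) (Set.mem_univ (1:ℝ))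
    zero_lt_one hd
  have : slope g 0 1 = g 1 - g 0 := by simp [slope_def_field]
  rw [this] at hs
  have h0 : g 0 = f y := by simp [g]
  have h1 : g 1 = f z := by simp [g]
  rw [h0, h1] at hs
  linarith

theorem cocoercive (f : E → ℝ) (f' : E → E) (L : ℝ) (hL : 0 < L)
    (hconv : ConvexOn ℝ Set.univ f)
    (hdiff : ∀ p, HasGradientAt f (f' p) p)
    (hLip : ∀ p q, ‖f' p - f' q‖ ≤ L * ‖p - q‖) (x y : E) :
    f y + ⟪f' y, x - y⟫ + 1 / (2 * L) * ‖f' x - f' y‖ ^ 2 ≤ f x := by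
  set g : E := f' x - f' y with hg
  set z : E := x - (1 / L) • g with hz
  have h1 := descentA f f' L hdiff hLip x z
  have h2 := grad_ineq f f' hconv hdiff y z
  have e1 : z - x = -((1 / L) • g) := by rw [hz]; abel
  have e2 : ‖z - x‖ ^ 2 = (1 / L) ^ 2 * ‖g‖ ^ 2 := by
    rw [e1, norm_neg, norm_smul, mul_pow]
    congr 1
    rw [Real.norm_eq_abs, abs_of_pos (by positivity)]
  have e3 : ⟪f' x, z - x⟫ = -((1 / L) * ⟪f' x, g⟫) := by
    rw [e1, inner_neg_right, real_inner_smul_right]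
  have e4 : ⟪f' y, z - y⟫ = ⟪f' y, x - y⟫ - (1 / L) * ⟪f' y, g⟫ := by
    have : z - y = (x - y) - (1 / L) • g := by rw [hz]; abel
    rw [this, inner_sub_right, real_inner_smul_right]
  have e5 : ⟪f' x, g⟫ - ⟪f' y, g⟫ = ‖g‖ ^ 2 := by
    rw [← inner_sub_left, hg, real_inner_self_eq_norm_sq]
  have e6 : L / 2 * ((1 / L) ^ 2 * ‖g‖ ^ 2) = 1 / (2 * L) * ‖g‖ ^ 2 := by
    field_simp
  have e7 : (1 / L) * ⟪f' x, g⟫ - (1 / L) * ⟪f' y, g⟫ = (1 / L) * ‖g‖ ^ 2 := by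
    rw [← mul_sub, e5]
  have e8 : (1 / L) * ‖g‖ ^ 2 - 1 / (2 * L) * ‖g‖ ^ 2 = 1 / (2 * L) * ‖g‖ ^ 2 := by
    field_simp; ring
  rw [e3, e2] at h1
  rw [e4] at h2
  linarith


open scoped RealInnerProductSpace

/-- Extended descent lemma. -/
theorem extended_descent_lemma
    {N : ℕ}
    (f : EuclideanSpace ℝ (Fin N) → ℝ)
    (f' : EuclideanSpace ℝ (Fin N) → EuclideanSpace ℝ (Fin N))
    (L : ℝ) (hL : 0 < L)
    (hconv : ConvexOn ℝ Set.univ f)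
    (hdiff : ∀ p, HasGradientAt f (f' p) p)
    (hLip : ∀ p q, ‖f' p - f' q‖ ≤ L * ‖p - q‖)
    (s : ℝ) (hs : s ∈ Set.Ioc (0 : ℝ) (1 / L))
    (x y : EuclideanSpace ℝ (Fin N)) :
    f (y - s • f' y)
      ≤ f x + ⟪f' y, y - x⟫ - (s / 2) * ‖f' y‖ ^ 2
        - (s / 2) * ‖f' x - f' y‖ ^ 2 := by
  obtain ⟨hs0, hsL⟩ := hs
  have hsL' : s * L ≤ 1 := by
    rw [le_div_iff₀ hL] at hsL
    exact hsL
  have h1 := descentA f f' L hdiff hLip y (y - s • f' y)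
  have h2 := cocoercive f f' L hL hconv hdiff hLip x y
  have e1 : y - s • f' y - y = -(s • f' y) := by abel
  have e2 : ⟪f' y, y - s • f' y - y⟫ = -(s * ‖f' y‖ ^ 2) := by
    rw [e1, inner_neg_right, real_inner_smul_right, real_inner_self_eq_norm_sq]
  have e3 : ‖y - s • f' y - y‖ ^ 2 = s ^ 2 * ‖f' y‖ ^ 2 := by
    rw [e1, norm_neg, norm_smul, mul_pow, Real.norm_eq_abs, abs_of_pos hs0]
  have e4 : ⟪f' y, y - x⟫ = -⟪f' y, x - y⟫ := by
    rw [← inner_neg_right]; congr 1; abel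
  rw [e2, e3] at h1
  have e5 : L / 2 * (s ^ 2 * ‖f' y‖ ^ 2) ≤ s / 2 * ‖f' y‖ ^ 2 := by
    have : L / 2 * s ^ 2 ≤ s / 2 := by nlinarith
    nlinarith [sq_nonneg ‖f' y‖]
  have e6 : s / 2 * ‖f' x - f' y‖ ^ 2 ≤ 1 / (2 * L) * ‖f' x - f' y‖ ^ 2 := by
    have : s / 2 ≤ 1 / (2 * L) := by
      rw [div_le_div_iff₀ two_pos (by positivity)]
      nlinarith
    nlinarith [sq_nonneg ‖f' x - f' y‖]
  rw [e4] at *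
  linarith
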